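/- Let (A; R) ∈ C (finite set system with δ ≥ 0) with associated matroid (A, cl). Then for every subset X of A which is a union of closed sets, α(X) ≥ 0, where α is defined inductively on unions of flats by α(X) = |X| − d(X) − Σ_{G flat, G ⊊ X} α(G). -/

import Mathlib

open Finset

/-- Predimension of `X`: `|X| - |{r ∈ R : r ⊆ X}|`. -/
def delta {α : Type*} [DecidableEq α] (R : Finset (Finset α)) (X : Finset α) : ℤ :=
  (X.card : ℤ) - ((R.filter (fun r => r ⊆ X)).card : ℤ)

/-- `F` is a flat (closed set) of the matroid on `A` with rank function `d`. -/
def IsFlat {α : Type*} [DecidableEq α] (A : Finset α) (d : Finset α → ℤ) (F : Finset α) :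
    Prop :=
  F ⊆ A ∧ ∀ y ∈ A, d (insert y F) = d F → y ∈ F

open scoped Classical in
/-- Mason's α-function: `α(X) = |X| - d(X) - Σ_{G a flat, G ⊊ X} α(G)`. -/
noncomputable def alphaFn {α : Type*} (Flat : Finset α → Prop) (d : Finset α → ℤ)
    (X : Finset α) : ℤ :=
  (X.card : ℤ) - d X -
    ∑ G ∈ (X.powerset.filter (fun G => Flat G ∧ G ≠ X)).attach, alphaFn Flat d G.1
termination_by X.card
decreasing_by
  have h := G.2
  simp only [Finset.mem_filter, Finset.mem_powerset] at h
  exact Finset.card_lt_card (lt_of_le_of_ne h.1 h.2.2)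

open scoped Classical

lemma alphaFn_eq {α : Type*} [DecidableEq α] (Flat : Finset α → Prop) (d : Finset α → ℤ)
    (X : Finset α) :
    alphaFn Flat d X = (X.card : ℤ) - d X -
      ∑ G ∈ (X.powerset.filter (fun G => Flat G ∧ G ≠ X)), alphaFn Flat d G := by
  rw [alphaFn, Finset.sum_attach]
  congr 2
  ext G
  simp [Finset.mem_filter]

section Aux
variable {α : Type*} [DecidableEq α] (A : Finset α) (R : Finset (Finset α)) (d : Finset α → ℤ)
variable (hd : ∀ X ⊆ A, IsLeast {z : ℤ | ∃ Y : Finset α, X ⊆ Y ∧ Y ⊆ A ∧ z = delta R Y} (d X))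

lemma delta_submod' (X Y : Finset α) :
    delta R (X ∪ Y) + delta R (X ∩ Y) ≤ delta R X + delta R Y := by
  unfold delta
  have hcard : (X ∪ Y).card + (X ∩ Y).card = X.card + Y.card :=
    card_union_add_card_inter X Y
  have h1 : (R.filter (fun r => r ⊆ X)) ∪ (R.filter (fun r => r ⊆ Y))
      ⊆ R.filter (fun r => r ⊆ X ∪ Y) := by
    intro r hr
    simp only [mem_union, mem_filter] at hr ⊢
    rcases hr with ⟨h, h2⟩ | ⟨h, h2⟩
    · exact ⟨h, h2.trans subset_union_left⟩
    · exact ⟨h, h2.trans subset_union_right⟩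
  have h2 : (R.filter (fun r => r ⊆ X)) ∩ (R.filter (fun r => r ⊆ Y))
      = R.filter (fun r => r ⊆ X ∩ Y) := by
    ext r
    simp only [mem_inter, mem_filter, subset_inter_iff]
    tauto
  have h3 := card_union_add_card_inter (R.filter (fun r => r ⊆ X)) (R.filter (fun r => r ⊆ Y))
  have h4 := card_le_card h1
  rw [h2] at h3
  push_cast
  have : ((R.filter (fun r => r ⊆ X)).card : ℤ) + (R.filter (fun r => r ⊆ Y)).card
      ≤ (R.filter (fun r => r ⊆ X ∪ Y)).card + (R.filter (fun r => r ⊆ X ∩ Y)).card := by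
    exact_mod_cast by omega
  push_cast at hcard
  linarith

variable (hd : ∀ X ⊆ A, IsLeast {z : ℤ | ∃ Y : Finset α, X ⊆ Y ∧ Y ⊆ A ∧ z = delta R Y} (d X))
include hd

include hd

lemma d_le_delta' {X : Finset α} (hX : X ⊆ A) : d X ≤ delta R X :=
  (hd X hX).2 ⟨X, subset_rfl, hX, rfl⟩

lemma d_mono' {X Y : Finset α} (hXY : X ⊆ Y) (hY : Y ⊆ A) : d X ≤ d Y := by
  obtain ⟨W, hYW, hWA, hdY⟩ := (hd Y hY).1
  have h := (hd X (hXY.trans hY)).2 ⟨W, hXY.trans hYW, hWA, rfl⟩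
  linarith [hdY ▸ h]
lemma d_submod' {X Y : Finset α} (hX : X ⊆ A) (hY : Y ⊆ A) :
    d (X ∪ Y) + d (X ∩ Y) ≤ d X + d Y := by
  obtain ⟨WX, hXW, hWXA, e1⟩ := (hd X hX).1
  obtain ⟨WY, hYW, hWYA, e2⟩ := (hd Y hY).1
  have h1 : d (X ∪ Y) ≤ delta R (WX ∪ WY) :=
    (hd (X ∪ Y) (union_subset hX hY)).2
      ⟨WX ∪ WY, union_subset_union hXW hYW, union_subset hWXA hWYA, rfl⟩
  have h2 : d (X ∩ Y) ≤ delta R (WX ∩ WY) :=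
    (hd (X ∩ Y) (inter_subset_left.trans hX)).2
      ⟨WX ∩ WY, inter_subset_inter hXW hYW, inter_subset_left.trans hWXA, rfl⟩
  have h3 := delta_submod' R WX WY
  linarith

lemma flat_d_eq' {F : Finset α} (hF : IsFlat A d F) : d F = delta R F := by
  obtain ⟨W, hFW, hWA, e⟩ := (hd F hF.1).1
  have hWF : W ⊆ F := by
    intro y hy
    apply hF.2 y (hWA hy)
    have hle : d (insert y F) ≤ delta R W :=
      (hd _ (insert_subset (hWA hy) hF.1)).2 ⟨W, insert_subset hy hFW, hWA, rfl⟩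
    have hge : d F ≤ d (insert y F) :=
      d_mono' A R d hd (subset_insert y F) (insert_subset (hWA hy) hF.1)
    linarith [e ▸ hle]
  have hWFe : W = F := subset_antisymm hWF hFW
  rw [e, hWFe]
lemma flat_inter' {F G : Finset α} (hF : IsFlat A d F) (hG : IsFlat A d G) :
    IsFlat A d (F ∩ G) := by
  refine ⟨inter_subset_left.trans hF.1, ?_⟩
  intro y hy hdy
  have key : ∀ {H : Finset α}, IsFlat A d H → F ∩ G ⊆ H → y ∈ H := by
    intro H hH hsub
    by_cases hyH : y ∈ H
    · exact hyH
    apply hH.2 y hy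
    have hu : insert y (F ∩ G) ∪ H = insert y H := by
      ext z
      simp only [mem_union, mem_insert, mem_inter]
      constructor
      · rintro ((rfl | hz) | hz)
        · exact Or.inl rfl
        · exact Or.inr (hsub (mem_inter.mpr hz))
        · exact Or.inr hz
      · rintro (rfl | hz)
        · exact Or.inl (Or.inl rfl)
        · exact Or.inr hz
    have hi : insert y (F ∩ G) ∩ H = F ∩ G := by
      ext z
      simp only [mem_inter, mem_insert]
      constructor
      · rintro ⟨(rfl | hz), hzH⟩
        · exact absurd hzH hyH
        · exact hz
      · intro hz
        exact ⟨Or.inr ⟨hz.1, hz.2⟩, hsub (mem_inter.mpr hz)⟩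
    have hsubA : insert y (F ∩ G) ⊆ A :=
      insert_subset hy (inter_subset_left.trans hF.1)
    have hsm := d_submod' A R d hd hsubA hH.1
    rw [hu, hi, hdy] at hsm
    have hmono : d H ≤ d (insert y H) :=
      d_mono' A R d hd (subset_insert y H) (insert_subset hy hH.1)
    linarith
  exact mem_inter.mpr ⟨key hF inter_subset_left, key hG inter_subset_right⟩

/-- For a flat `F`, the sum of α over all flats contained in `F` equals `|R[F]|`. -/
lemma sum_flats_flat {F : Finset α} (hF : IsFlat A d F) :
    ∑ G ∈ A.powerset.filter (fun G => IsFlat A d G ∧ G ⊆ F), alphaFn (IsFlat A d) d G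
      = ((R.filter (fun r => r ⊆ F)).card : ℤ) := by
  have hset : A.powerset.filter (fun G => IsFlat A d G ∧ G ⊆ F)
      = insert F (F.powerset.filter (fun G => IsFlat A d G ∧ G ≠ F)) := by
    ext G
    simp only [mem_insert, mem_filter, mem_powerset]
    constructor
    · rintro ⟨-, hGfl, hGF⟩
      by_cases h : G = F
      · exact Or.inl h
      · exact Or.inr ⟨hGF, hGfl, h⟩
    · rintro (rfl | ⟨hGF, hGfl, hne⟩)
      · exact ⟨hF.1, hF, subset_rfl⟩
      · exact ⟨hGfl.1, hGfl, hGF⟩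
  have hFnot : F ∉ F.powerset.filter (fun G => IsFlat A d G ∧ G ≠ F) := by
    simp
  rw [hset, Finset.sum_insert hFnot]
  have heq := alphaFn_eq (IsFlat A d) d F
  have hdF := flat_d_eq' A R d hd hF
  rw [delta] at hdF
  linarith [heq]

/-- Inclusion–exclusion over a list of flats. -/
lemma sum_flats_list :
    ∀ (n : ℕ) (l : List (Finset α)), l.length = n → (∀ F ∈ l, IsFlat A d F) →
    ∑ G ∈ A.powerset.filter (fun G => IsFlat A d G ∧ ∃ F ∈ l, G ⊆ F),
        alphaFn (IsFlat A d) d G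
      = ((R.filter (fun r => ∃ F ∈ l, r ⊆ F)).card : ℤ) := by
  intro n
  induction n with
  | zero =>
    intro l hl _
    rw [List.length_eq_zero_iff] at hl
    subst hl
    simp
  | succ n ih =>
    intro l hl hfl
    obtain ⟨F, l', rfl⟩ : ∃ F l', l = F :: l' := by
      cases l with
      | nil => simp at hl
      | cons a l' => exact ⟨a, l', rfl⟩
    have hl' : l'.length = n := by simpa using hl
    have hF : IsFlat A d F := hfl F (List.mem_cons_self)
    have hfl' : ∀ G ∈ l', IsFlat A d G := fun G hG => hfl G (List.mem_cons_of_mem F hG)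
    -- the three finsets of flats
    set s := A.powerset.filter (fun G => IsFlat A d G ∧ G ⊆ F) with hs
    set t := A.powerset.filter (fun G => IsFlat A d G ∧ ∃ F' ∈ l', G ⊆ F') with ht
    have hU : A.powerset.filter (fun G => IsFlat A d G ∧ ∃ F' ∈ F :: l', G ⊆ F') = s ∪ t := by
      ext G
      simp only [hs, ht, mem_union, mem_filter, mem_powerset, List.mem_cons]
      constructor
      · rintro ⟨hGA, hGfl, F', (rfl | hF'), hGF'⟩
        · exact Or.inl ⟨hGA, hGfl, hGF'⟩
        · exact Or.inr ⟨hGA, hGfl, F', hF', hGF'⟩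
      · rintro (⟨hGA, hGfl, hGF⟩ | ⟨hGA, hGfl, F', hF', hGF'⟩)
        · exact ⟨hGA, hGfl, F, Or.inl rfl, hGF⟩
        · exact ⟨hGA, hGfl, F', Or.inr hF', hGF'⟩
    have hI : s ∩ t = A.powerset.filter
        (fun G => IsFlat A d G ∧ ∃ F' ∈ l'.map (· ∩ F), G ⊆ F') := by
      ext G
      simp only [hs, ht, mem_inter, mem_filter, mem_powerset, List.mem_map]
      constructor
      · rintro ⟨⟨hGA, hGfl, hGF⟩, ⟨-, -, F', hF', hGF'⟩⟩
        exact ⟨hGA, hGfl, F' ∩ F, ⟨F', hF', rfl⟩, subset_inter hGF' hGF⟩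
      · rintro ⟨hGA, hGfl, _, ⟨F', hF', rfl⟩, hGF'⟩
        rw [subset_inter_iff] at hGF'
        exact ⟨⟨hGA, hGfl, hGF'.2⟩, ⟨hGA, hGfl, F', hF', hGF'.1⟩⟩
    -- sums
    have hsum : ∑ G ∈ s ∪ t, alphaFn (IsFlat A d) d G + ∑ G ∈ s ∩ t, alphaFn (IsFlat A d) d G
        = ∑ G ∈ s, alphaFn (IsFlat A d) d G + ∑ G ∈ t, alphaFn (IsFlat A d) d G :=
      Finset.sum_union_inter
    have hS : ∑ G ∈ s, alphaFn (IsFlat A d) d G = ((R.filter (fun r => r ⊆ F)).card : ℤ) :=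
      sum_flats_flat A R d hd hF
    have hT : ∑ G ∈ t, alphaFn (IsFlat A d) d G
        = ((R.filter (fun r => ∃ F' ∈ l', r ⊆ F')).card : ℤ) := ih l' hl' hfl'
    have hmapfl : ∀ H ∈ l'.map (· ∩ F), IsFlat A d H := by
      intro H hH
      rw [List.mem_map] at hH
      obtain ⟨F', hF', rfl⟩ := hH
      exact flat_inter' A R d hd (hfl' F' hF') hF
    have hST : ∑ G ∈ s ∩ t, alphaFn (IsFlat A d) d G
        = ((R.filter (fun r => ∃ F' ∈ l'.map (· ∩ F), r ⊆ F')).card : ℤ) := by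
      rw [hI]
      exact ih (l'.map (· ∩ F)) (by simpa using hl') hmapfl
    -- cards of relations
    have hRU : R.filter (fun r => ∃ F' ∈ F :: l', r ⊆ F')
        = R.filter (fun r => r ⊆ F) ∪ R.filter (fun r => ∃ F' ∈ l', r ⊆ F') := by
      ext r
      simp only [mem_union, mem_filter, List.mem_cons]
      constructor
      · rintro ⟨hr, F', (rfl | hF'), hrF'⟩
        · exact Or.inl ⟨hr, hrF'⟩
        · exact Or.inr ⟨hr, F', hF', hrF'⟩
      · rintro (⟨hr, hrF⟩ | ⟨hr, F', hF', hrF'⟩)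
        · exact ⟨hr, F, Or.inl rfl, hrF⟩
        · exact ⟨hr, F', Or.inr hF', hrF'⟩
    have hRI : R.filter (fun r => r ⊆ F) ∩ R.filter (fun r => ∃ F' ∈ l', r ⊆ F')
        = R.filter (fun r => ∃ F' ∈ l'.map (· ∩ F), r ⊆ F') := by
      ext r
      simp only [mem_inter, mem_filter, List.mem_map]
      constructor
      · rintro ⟨⟨hr, hrF⟩, ⟨-, F', hF', hrF'⟩⟩
        exact ⟨hr, F' ∩ F, ⟨F', hF', rfl⟩, subset_inter hrF' hrF⟩
      · rintro ⟨hr, _, ⟨F', hF', rfl⟩, hrF'⟩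
        rw [subset_inter_iff] at hrF'
        exact ⟨⟨hr, hrF'.2⟩, ⟨hr, F', hF', hrF'.1⟩⟩
    have hRcard := card_union_add_card_inter (R.filter (fun r => r ⊆ F))
      (R.filter (fun r => ∃ F' ∈ l', r ⊆ F'))
    rw [hRI] at hRcard
    rw [hU, hRU]
    have hz : ((R.filter (fun r => r ⊆ F) ∪ R.filter (fun r => ∃ F' ∈ l', r ⊆ F')).card : ℤ)
          + ((R.filter (fun r => ∃ F' ∈ l'.map (· ∩ F), r ⊆ F')).card : ℤ)
        = ((R.filter (fun r => r ⊆ F)).card : ℤ)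
          + ((R.filter (fun r => ∃ F' ∈ l', r ⊆ F')).card : ℤ) := by
      exact_mod_cast hRcard
    linarith [hsum, hS, hT, hST, hz]
end Aux

/-- `X` is a union of flats. -/


def UnionOfFlats {α : Type*} (Flat : Finset α → Prop) (X : Finset α) : Prop :=
  ∀ x ∈ X, ∃ F, Flat F ∧ F ⊆ X ∧ x ∈ F

/-- For the matroid `PG(A; R)` of a set system with `δ ≥ 0`, Mason's α-function is
nonnegative on every union of flats. -/
theorem alpha_nonneg_of_presentation {α : Type*} [DecidableEq α]
    (A : Finset α) (R : Finset (Finset α))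
    (hR : ∀ r ∈ R, r.Nonempty ∧ r ⊆ A)
    (hpos : ∀ X ⊆ A, 0 ≤ delta R X)
    (d : Finset α → ℤ)
    (hd : ∀ X ⊆ A, IsLeast {z : ℤ | ∃ Y : Finset α, X ⊆ Y ∧ Y ⊆ A ∧ z = delta R Y} (d X)) :
    ∀ X ⊆ A, UnionOfFlats (IsFlat A d) X → 0 ≤ alphaFn (IsFlat A d) d X := by
  intro X hX _
  rw [alphaFn_eq]
  have hfl : ∀ F ∈ (X.powerset.filter (fun G => IsFlat A d G ∧ G ≠ X)).toList,
      IsFlat A d F := by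
    intro F hF
    rw [Finset.mem_toList, mem_filter] at hF
    exact hF.2.1
  have hsum := sum_flats_list A R d hd _
    (X.powerset.filter (fun G => IsFlat A d G ∧ G ≠ X)).toList rfl hfl
  have hset : A.powerset.filter (fun G => IsFlat A d G ∧
        ∃ F ∈ (X.powerset.filter (fun G => IsFlat A d G ∧ G ≠ X)).toList, G ⊆ F)
      = X.powerset.filter (fun G => IsFlat A d G ∧ G ≠ X) := by
    ext G
    simp only [mem_filter, mem_powerset, Finset.mem_toList]
    constructor
    · rintro ⟨hGA, hGfl, F, ⟨hFX, hFfl, hFne⟩, hGF⟩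
      refine ⟨hGF.trans hFX, hGfl, ?_⟩
      rintro rfl
      exact hFne (subset_antisymm hFX hGF)
    · rintro ⟨hGX, hGfl, hGne⟩
      exact ⟨hGfl.1, hGfl, G, ⟨hGX, hGfl, hGne⟩, subset_rfl⟩
  rw [hset] at hsum
  have hle : (R.filter (fun r =>
        ∃ F ∈ (X.powerset.filter (fun G => IsFlat A d G ∧ G ≠ X)).toList, r ⊆ F)).card
      ≤ (R.filter (fun r => r ⊆ X)).card := by
    apply card_le_card
    intro r hr
    rw [mem_filter] at hr ⊢
    obtain ⟨hrR, F, hFT, hrF⟩ := hr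
    rw [Finset.mem_toList, mem_filter, mem_powerset] at hFT
    exact ⟨hrR, hrF.trans hFT.1⟩
  have hdd := d_le_delta' A R d hd hX
  rw [delta] at hdd
  have hle' : ((R.filter (fun r =>
        ∃ F ∈ (X.powerset.filter (fun G => IsFlat A d G ∧ G ≠ X)).toList, r ⊆ F)).card : ℤ)
      ≤ ((R.filter (fun r => r ⊆ X)).card : ℤ) := by exact_mod_cast hle
  linarith [hsum, hle', hdd]
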